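/- Let a be a signed digit expansion of x ∈ ℝ and k ∈ ℕ be such that for every n > k not both a n and a (n+1) are nonzero. Then every x' ∈ ℝ with |x - x'| ≤ 2^(-k)/3 admits a signed digit expansion b with b n = a n for all n ≤ k. -/

import Mathlib

open Finset Function Filter

private lemma two_zpow_pos' (n : ℤ) : (0:ℝ) < 2 ^ n := zpow_pos (by norm_num) n

/-- shift injection ℕ → ℤ past `k` -/
private def sh (k : ℤ) (j : ℕ) : ℤ := k + 1 + j

private lemma sh_inj (k : ℤ) : Function.Injective (sh k) := by
  intro a b h
  simp only [sh, add_right_inj] at h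
  exact_mod_cast h

private lemma sh_range (k : ℤ) {f : ℤ → ℝ} (h0 : ∀ n ≤ k, f n = 0) :
    ∀ n ∉ Set.range (sh k), f n = 0 := by
  intro n hn
  by_contra h
  apply hn
  have hk : k < n := by
    by_contra hk'
    exact h (h0 n (le_of_not_gt hk'))
  refine ⟨(n - k - 1).toNat, ?_⟩
  simp only [sh]
  omega

private lemma sh_support (k : ℤ) {f : ℤ → ℝ} (h0 : ∀ n ≤ k, f n = 0) :
    Function.support f ⊆ Set.range (sh k) := by
  intro n hn
  by_contra h
  exact hn (sh_range k h0 n h)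

private lemma geom_shift (k : ℤ) :
    HasSum (fun j : ℕ => (2:ℝ) ^ (-(sh k j))) ((2:ℝ) ^ (-k)) := by
  have h := hasSum_geometric_of_lt_one (by norm_num : (0:ℝ) ≤ 1/2) (by norm_num : (1/2:ℝ) < 1)
  have h2 := h.mul_left ((2:ℝ) ^ (-(k+1)))
  have heq : ∀ j : ℕ, (2:ℝ) ^ (-(k+1)) * (1/2)^j = (2:ℝ) ^ (-(sh k j)) := by
    intro j
    have h3 : (-(sh k j)) = (-(k+1)) + (-(j:ℤ)) := by simp only [sh]; ring
    rw [h3, zpow_add₀ (by norm_num : (2:ℝ) ≠ 0)]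
    congr 1
    rw [zpow_neg, zpow_natCast]
    simp [one_div, inv_pow]
  have hval : (2:ℝ) ^ (-(k+1)) * (1 - 1/2)⁻¹ = (2:ℝ) ^ (-k) := by
    have h4 : (1 - 1/2 : ℝ)⁻¹ = 2 := by norm_num
    rw [h4, show (-k) = (-(k+1)) + 1 by ring, zpow_add₀ (by norm_num : (2:ℝ) ≠ 0), zpow_one]
  rw [← hval, ← funext heq]
  exact h2

private lemma binary_digits (s : ℝ) (h0 : 0 ≤ s) (h1 : s < 1) :
    ∃ d : ℕ → ℤ, (∀ j, d j = 0 ∨ d j = 1) ∧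
      HasSum (fun j : ℕ => (d j : ℝ) * (1/2) ^ (j+1)) s := by
  set d : ℕ → ℤ := fun j => ⌊s * 2 ^ (j+1)⌋ - 2 * ⌊s * 2 ^ j⌋ with hd
  have hdig : ∀ j, d j = 0 ∨ d j = 1 := by
    intro j
    have h2 : s * 2^(j+1) = 2 * (s * 2^j) := by ring
    have hfl : (⌊s * 2 ^ j⌋ : ℝ) ≤ s * 2^j := Int.floor_le _
    have hfl2 : s * 2^j < ⌊s * 2 ^ j⌋ + 1 := Int.lt_floor_add_one _
    have hlo : (2 * ⌊s * 2 ^ j⌋ : ℤ) ≤ ⌊s * 2^(j+1)⌋ := by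
      rw [h2]; exact Int.le_floor.mpr (by push_cast; linarith)
    have hhi : ⌊s * 2^(j+1)⌋ < 2 * ⌊s * 2 ^ j⌋ + 2 := by
      rw [h2]; exact Int.floor_lt.mpr (by push_cast; linarith)
    simp only [hd]
    omega
  have hpart : ∀ m, ∑ j ∈ Finset.range m, (d j : ℝ) * (1/2)^(j+1)
      = (⌊s * 2^m⌋ : ℝ) / 2^m := by
    intro m
    induction m with
    | zero =>
      have hz : ⌊s⌋ = 0 := Int.floor_eq_zero_iff.mpr (Set.mem_Ico.mpr ⟨h0, h1⟩)
      norm_num [hz]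
    | succ m ih =>
      rw [Finset.sum_range_succ, ih]
      simp only [hd]
      have h2 : ((2:ℝ)^(m+1)) ≠ 0 := by positivity
      have h3 : ((2:ℝ)^m) ≠ 0 := by positivity
      push_cast
      simp only [div_eq_mul_inv, one_mul, inv_pow, pow_succ]
      ring
  have hsum : Summable (fun j : ℕ => (d j : ℝ) * (1/2)^(j+1)) := by
    apply Summable.of_norm_bounded (g := fun j : ℕ => (1/2:ℝ)^(j+1))
    · exact (summable_geometric_of_lt_one (by norm_num) (by norm_num)).comp_injective
        (add_left_injective 1)
    · intro j
      rw [Real.norm_eq_abs, abs_mul]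
      have hj := hdig j
      have h5 : |(d j : ℝ)| ≤ 1 := by rcases hj with h | h <;> simp [h]
      have h6 : |(1/2:ℝ)^(j+1)| = (1/2:ℝ)^(j+1) := abs_of_nonneg (by positivity)
      rw [h6]
      nlinarith [pow_pos (by norm_num : (0:ℝ) < 1/2) (j+1)]
  refine ⟨d, hdig, ?_⟩
  have hS := hsum.hasSum
  have hT := hS.tendsto_sum_nat
  rw [funext hpart] at hT
  have hT2 : Tendsto (fun m : ℕ => (⌊s * 2^m⌋ : ℝ) / 2^m) atTop (nhds s) := by
    have hlow : Tendsto (fun m : ℕ => s - (1/2:ℝ)^m) atTop (nhds s) := by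
      have := tendsto_pow_atTop_nhds_zero_of_lt_one (by norm_num : (0:ℝ) ≤ 1/2)
        (by norm_num : (1/2:ℝ) < 1)
      simpa using tendsto_const_nhds.sub this
    apply tendsto_of_tendsto_of_tendsto_of_le_of_le hlow tendsto_const_nhds
    · intro m
      show s - (1/2:ℝ)^m ≤ (⌊s * 2^m⌋ : ℝ) / 2^m
      have hp : (0:ℝ) < 2^m := by positivity
      have hfl := Int.lt_floor_add_one (s * 2^m)
      rw [le_div_iff₀ hp]
      have h12 : (1/2:ℝ)^m * 2^m = 1 := by
        rw [one_div, inv_pow, inv_mul_cancel₀ (ne_of_gt hp)]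
      nlinarith
    · intro m
      show (⌊s * 2^m⌋ : ℝ) / 2^m ≤ s
      have hp : (0:ℝ) < 2^m := by positivity
      have hfl := Int.floor_le (s * 2^m)
      rw [div_le_iff₀ hp]
      linarith
  have hEq := tendsto_nhds_unique hT hT2
  rwa [hEq] at hS

private lemma exists_digits_nonneg (k : ℤ) (r : ℝ) (h0 : 0 ≤ r) (h1 : r ≤ (2:ℝ) ^ (-k)) :
    ∃ c : ℤ → ℤ, (∀ n, c n = 0 ∨ c n = 1) ∧ (∀ n ≤ k, c n = 0) ∧
      HasSum (fun n : ℤ => (c n : ℝ) * 2 ^ (-n)) r := by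
  rcases eq_or_lt_of_le h1 with heq | hlt
  · refine ⟨fun n => if k < n then 1 else 0, fun n => by by_cases h : k < n <;> simp [h],
      fun n hn => by simp [not_lt.mpr hn], ?_⟩
    set f : ℤ → ℝ := fun n => ((if k < n then (1:ℤ) else 0 : ℤ) : ℝ) * 2 ^ (-n) with hf
    have h0' : ∀ n ≤ k, f n = 0 := by intro n hn; simp [hf, not_lt.mpr hn]
    rw [← Function.Injective.hasSum_iff (sh_inj k) (sh_range k h0')]
    have : (f ∘ sh k) = fun j : ℕ => (2:ℝ) ^ (-(sh k j)) := by
      funext j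
      have : k < sh k j := by simp only [sh]; omega
      simp [hf, Function.comp, this]
    rw [this, heq]
    exact geom_shift k
  · set s := r * 2 ^ k with hs
    have hs0 : 0 ≤ s := mul_nonneg h0 (le_of_lt (two_zpow_pos' k))
    have hs1 : s < 1 := by
      have := mul_lt_mul_of_pos_right hlt (two_zpow_pos' k)
      rwa [← zpow_add₀ (by norm_num : (2:ℝ) ≠ 0), neg_add_cancel, zpow_zero] at this
    obtain ⟨d, hdig, hsum⟩ := binary_digits s hs0 hs1
    refine ⟨fun n => if k < n then d (n - (k+1)).toNat else 0, fun n => by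
      by_cases h : k < n
      · simpa [h] using hdig (n - (k+1)).toNat
      · simp [h], fun n hn => by simp [not_lt.mpr hn], ?_⟩
    set c : ℤ → ℤ := fun n => if k < n then d (n - (k+1)).toNat else 0 with hc
    set f : ℤ → ℝ := fun n => (c n : ℝ) * 2 ^ (-n) with hf
    have h0' : ∀ n ≤ k, f n = 0 := by intro n hn; simp [hf, hc, not_lt.mpr hn]
    rw [← Function.Injective.hasSum_iff (sh_inj k) (sh_range k h0')]
    have hcomp : (f ∘ sh k) = fun j : ℕ => (2:ℝ)^(-k) * ((d j : ℝ) * (1/2) ^ (j+1)) := by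
      funext j
      have hlt' : k < sh k j := by simp only [sh]; omega
      have htn : (sh k j - (k+1)).toNat = j := by simp only [sh]; omega
      have hzp : (2:ℝ) ^ (-(sh k j)) = (2:ℝ)^(-k) * (1/2:ℝ)^(j+1) := by
        have h3 : (-(sh k j)) = (-k) + (-(1+(j:ℤ))) := by simp only [sh]; ring
        rw [h3, zpow_add₀ (by norm_num : (2:ℝ) ≠ 0)]
        congr 1
        rw [zpow_neg]
        have : (1 + (j:ℤ)) = ((j+1 : ℕ) : ℤ) := by push_cast; ring
        rw [this, zpow_natCast]
        simp [one_div, inv_pow]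
      simp only [Function.comp, hf, hc, if_pos hlt', htn, hzp]
      ring
    rw [hcomp]
    have := hsum.mul_left ((2:ℝ)^(-k))
    have hval : (2:ℝ)^(-k) * s = r := by
      rw [hs, mul_comm r, ← mul_assoc, ← zpow_add₀ (by norm_num : (2:ℝ) ≠ 0),
        neg_add_cancel, zpow_zero, one_mul]
    rwa [hval] at this

private lemma exists_digits (k : ℤ) (r : ℝ) (h : |r| ≤ (2:ℝ) ^ (-k)) :
    ∃ c : ℤ → ℤ, (∀ n, c n = -1 ∨ c n = 0 ∨ c n = 1) ∧ (∀ n ≤ k, c n = 0) ∧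
      HasSum (fun n : ℤ => (c n : ℝ) * 2 ^ (-n)) r := by
  rcases le_total 0 r with hr | hr
  · obtain ⟨c, h1, h2, h3⟩ := exists_digits_nonneg k r hr (by rwa [abs_of_nonneg hr] at h)
    exact ⟨c, fun n => by rcases h1 n with h | h <;> simp [h], h2, h3⟩
  · obtain ⟨c, h1, h2, h3⟩ := exists_digits_nonneg k (-r) (by linarith)
      (by rwa [abs_of_nonpos hr] at h)
    refine ⟨fun n => -(c n), fun n => by rcases h1 n with h | h <;> simp [h],
      fun n hn => by simp [h2 n hn], ?_⟩
    have := h3.neg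
    have hcomp : (fun n : ℤ => ((-(c n) : ℤ) : ℝ) * 2 ^ (-n))
        = fun n : ℤ => -((c n : ℝ) * 2 ^ (-n)) := by
      funext n; push_cast; ring
    rw [hcomp]
    simpa using this

/-- `a : ℤ → ℤ` is a signed digit expansion of the real number `x`. -/
def IsSignedDigitExpansion (a : ℤ → ℤ) (x : ℝ) : Prop :=
  (∀ n : ℤ, a n = -1 ∨ a n = 0 ∨ a n = 1) ∧
  (∃ N : ℕ, ∀ n : ℤ, n ≤ -(N : ℤ) → a n = 0) ∧
  Summable (fun n : ℤ => (a n : ℝ) * (2 : ℝ) ^ (-n)) ∧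
  x = ∑' n : ℤ, (a n : ℝ) * (2 : ℝ) ^ (-n)

/-- If the digits of a signed digit expansion of `x` are non-adjacent beyond
position `k`, then every `x'` with `|x - x'| ≤ 2^(-k)/3` has a signed digit
expansion agreeing with the given one up to position `k`. -/
theorem signedDigit_perturbation (a : ℤ → ℤ) (x : ℝ) (k : ℕ)
    (ha : IsSignedDigitExpansion a x)
    (hna : ∀ n : ℤ, (k : ℤ) < n → a n = 0 ∨ a (n + 1) = 0) :
    ∀ x' : ℝ, |x - x'| ≤ (2 : ℝ) ^ (-(k : ℤ)) / 3 →
      ∃ b : ℤ → ℤ, IsSignedDigitExpansion b x' ∧ ∀ n : ℤ, n ≤ (k : ℤ) → b n = a n := by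
  obtain ⟨hdig, ⟨N, hN⟩, hsumf, hx⟩ := ha
  intro x' hx'
  set f : ℤ → ℝ := fun n => (a n : ℝ) * 2 ^ (-n) with hfdef
  set hd : ℤ → ℝ := fun n => if n ≤ (k:ℤ) then f n else 0 with hhd
  set f' : ℤ → ℝ := fun n => if (k:ℤ) < n then f n else 0 with hf'
  set y : ℝ := ∑ n ∈ Finset.Icc (-(N:ℤ)) (k:ℤ), f n with hy
  have hsplit : ∀ n, f n = hd n + f' n := by
    intro n
    by_cases h : n ≤ (k:ℤ)
    · simp [hhd, hf', h, not_lt.mpr h]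
    · simp [hhd, hf', h, lt_of_not_ge h]
  have hhd_fin : ∀ n ∉ Finset.Icc (-(N:ℤ)) (k:ℤ), hd n = 0 := by
    intro n hn
    simp only [Finset.mem_Icc, not_and_or, not_le] at hn
    rcases hn with h | h
    · by_cases h2 : n ≤ (k:ℤ)
      · simp [hhd, h2, hfdef, hN n (by omega)]
      · simp [hhd, h2]
    · simp [hhd, not_le.mpr h]
  have hhd_sum : Summable hd := summable_of_ne_finset_zero hhd_fin
  have hhd_tsum : ∑' n, hd n = y := by
    rw [tsum_eq_sum hhd_fin]
    apply Finset.sum_congr rfl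
    intro n hn
    simp only [Finset.mem_Icc] at hn
    simp [hhd, hn.2]
  -- tail sequence over ℕ
  set g : ℕ → ℝ := fun j => f' (sh (k:ℤ) j) with hg
  have habs : ∀ n : ℤ, |(a n : ℝ)| ≤ 1 := by
    intro n
    rcases hdig n with h | h | h <;> simp [h]
  have hg_bound : ∀ j, |g j| ≤ 2 ^ (-(sh (k:ℤ) j)) := by
    intro j
    simp only [hg, hf']
    split
    · rw [abs_mul]
      have h6 : |(2:ℝ) ^ (-(sh (k:ℤ) j))| = (2:ℝ) ^ (-(sh (k:ℤ) j)) :=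
        abs_of_pos (two_zpow_pos' _)
      rw [h6]
      nlinarith [habs (sh (k:ℤ) j), two_zpow_pos' (-(sh (k:ℤ) j))]
    · simp [le_of_lt (two_zpow_pos' _)]
  have hgeo : Summable (fun j : ℕ => (2:ℝ) ^ (-(sh (k:ℤ) j))) := (geom_shift _).summable
  have hgabs_sum : Summable (fun j => |g j|) := by
    apply Summable.of_norm_bounded hgeo
    intro j
    rw [Real.norm_eq_abs, abs_abs]
    exact hg_bound j
  have hg_sum : Summable g := by
    apply Summable.of_norm_bounded hgeo
    intro j
    rw [Real.norm_eq_abs]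
    exact hg_bound j
  have hf'0 : ∀ n ≤ (k:ℤ), f' n = 0 := by intro n hn; simp [hf', not_lt.mpr hn]
  have hf'_sum : Summable f' :=
    (Function.Injective.summable_iff (sh_inj _) (sh_range _ hf'0)).mp hg_sum
  have hf'_tsum : ∑' n, f' n = ∑' j, g j :=
    (Function.Injective.tsum_eq (sh_inj _) (sh_support _ hf'0)).symm
  have hx2 : x = y + ∑' j, g j := by
    rw [hx, ← hhd_tsum, ← hf'_tsum, ← Summable.tsum_add hhd_sum hf'_sum]
    exact tsum_congr hsplit
  -- bound on the tail
  have hpair : ∀ i : ℕ, |g (2*i)| + |g (2*i+1)| ≤ (2:ℝ)^(-(k:ℤ)-1) * (1/4)^i := by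
    intro i
    have hw : (2:ℝ)^(-(sh (k:ℤ) (2*i))) = (2:ℝ)^(-(k:ℤ)-1) * (1/4)^i := by
      have h3 : (-(sh (k:ℤ) (2*i))) = (-(k:ℤ)-1) + (-(2*i:ℤ)) := by
        simp only [sh]; push_cast; ring
      rw [h3, zpow_add₀ (by norm_num : (2:ℝ) ≠ 0)]
      congr 1
      rw [zpow_neg]
      have h4 : ((2:ℤ)*i) = ((2*i : ℕ) : ℤ) := by push_cast; ring
      rw [h4, zpow_natCast]
      rw [pow_mul]
      simp [one_div, inv_pow]
      norm_num
    rcases hna (sh (k:ℤ) (2*i)) (by simp only [sh]; omega) with h | h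
    · have hz : g (2*i) = 0 := by
        simp only [hg, hf', hfdef]
        split <;> simp [h]
      have hb := hg_bound (2*i+1)
      have hmono : (2:ℝ)^(-(sh (k:ℤ) (2*i+1))) ≤ (2:ℝ)^(-(sh (k:ℤ) (2*i))) := by
        apply zpow_le_zpow_right₀ (by norm_num : (1:ℝ) ≤ 2)
        simp only [sh]
        push_cast
        omega
      rw [hz, abs_zero, zero_add, ← hw]
      exact le_trans hb hmono
    · have hsh : sh (k:ℤ) (2*i+1) = sh (k:ℤ) (2*i) + 1 := by simp only [sh]; push_cast; ring
      have hz : g (2*i+1) = 0 := by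
        simp only [hg, hf', hfdef, hsh]
        split <;> simp [h]
      have hb := hg_bound (2*i)
      rw [hz, abs_zero, add_zero, ← hw]
      exact hb
  have hgeo4 : HasSum (fun i : ℕ => (2:ℝ)^(-(k:ℤ)-1) * (1/4)^i)
      ((2:ℝ)^(-(k:ℤ)-1) * (1 - 1/4)⁻¹) :=
    (hasSum_geometric_of_lt_one (by norm_num) (by norm_num)).mul_left _
  have hgeo4val : (2:ℝ)^(-(k:ℤ)-1) * (1 - 1/4:ℝ)⁻¹ = (2:ℝ)^(-(k:ℤ)) * (2/3) := by
    have h5 : (2:ℝ)^(-(k:ℤ)-1) = (2:ℝ)^(-(k:ℤ)) * 2⁻¹ := by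
      rw [← zpow_neg_one (2:ℝ), ← zpow_add₀ (by norm_num : (2:ℝ) ≠ 0), sub_eq_add_neg]
    rw [h5]
    norm_num
    ring
  have heven : Summable (fun i : ℕ => |g (2*i)|) := by
    have := hgabs_sum.comp_injective (i := fun i : ℕ => 2*i) (fun a b h => by simp only [] at h; omega)
    exact this
  have hodd : Summable (fun i : ℕ => |g (2*i+1)|) := by
    have := hgabs_sum.comp_injective (i := fun i : ℕ => 2*i+1) (fun a b h => by simp only [] at h; omega)
    exact this
  have htail : |∑' j, g j| ≤ (2:ℝ)^(-(k:ℤ)) * (2/3) := by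
    have h1 : |∑' j, g j| ≤ ∑' j, |g j| := by
      have := norm_tsum_le_tsum_norm (f := g) (by simpa [Real.norm_eq_abs] using hgabs_sum)
      simpa [Real.norm_eq_abs] using this
    have h2 : ∑' j, |g j| = (∑' i, |g (2*i)|) + ∑' i, |g (2*i+1)| :=
      (tsum_even_add_odd (f := fun j => |g j|) heven hodd).symm
    have h3 : (∑' i, |g (2*i)|) + ∑' i, |g (2*i+1)|
        = ∑' i, (|g (2*i)| + |g (2*i+1)|) := (Summable.tsum_add heven hodd).symm
    have h4 : ∑' i, (|g (2*i)| + |g (2*i+1)|) ≤ ∑' i, (2:ℝ)^(-(k:ℤ)-1) * (1/4)^i :=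
      Summable.tsum_le_tsum hpair (heven.add hodd) hgeo4.summable
    rw [hgeo4.tsum_eq, hgeo4val] at h4
    calc |∑' j, g j| ≤ ∑' j, |g j| := h1
      _ = ∑' i, (|g (2*i)| + |g (2*i+1)|) := by rw [h2, h3]
      _ ≤ (2:ℝ)^(-(k:ℤ)) * (2/3) := h4
  -- the remainder to encode
  set r : ℝ := x' - y with hr
  have hrbound : |r| ≤ (2:ℝ)^(-(k:ℤ)) := by
    have : r = (x' - x) + ∑' j, g j := by rw [hr, hx2]; ring
    rw [this]
    calc |(x' - x) + ∑' j, g j| ≤ |x' - x| + |∑' j, g j| := abs_add_le _ _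
      _ ≤ (2:ℝ)^(-(k:ℤ))/3 + (2:ℝ)^(-(k:ℤ)) * (2/3) := by
          have : |x' - x| = |x - x'| := abs_sub_comm _ _
          rw [this]
          exact add_le_add hx' htail
      _ = (2:ℝ)^(-(k:ℤ)) := by ring
  obtain ⟨c, hc_dig, hc0, hc_sum⟩ := exists_digits (k:ℤ) r hrbound
  refine ⟨fun n => if n ≤ (k:ℤ) then a n else c n, ⟨?_, ⟨N, ?_⟩, ?_, ?_⟩, ?_⟩
  · intro n
    by_cases h : n ≤ (k:ℤ)
    · simpa [h] using hdig n
    · simpa [h] using hc_dig n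
  · intro n hn
    have h7 : n ≤ (k:ℤ) := by omega
    simp [h7, hN n hn]
  · have hbsplit : (fun n : ℤ => (((if n ≤ (k:ℤ) then a n else c n) : ℤ) : ℝ) * 2 ^ (-n))
        = fun n : ℤ => hd n + (c n : ℝ) * 2 ^ (-n) := by
      funext n
      by_cases h : n ≤ (k:ℤ)
      · simp [h, hhd, hfdef, hc0 n h]
      · simp [h, hhd]
    rw [hbsplit]
    exact hhd_sum.add hc_sum.summable
  · have hbsplit : (fun n : ℤ => (((if n ≤ (k:ℤ) then a n else c n) : ℤ) : ℝ) * 2 ^ (-n))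
        = fun n : ℤ => hd n + (c n : ℝ) * 2 ^ (-n) := by
      funext n
      by_cases h : n ≤ (k:ℤ)
      · simp [h, hhd, hfdef, hc0 n h]
      · simp [h, hhd]
    rw [hbsplit, Summable.tsum_add hhd_sum hc_sum.summable, hhd_tsum, hc_sum.tsum_eq]
    rw [hr]
    ring
  · intro n hn
    simp [hn]
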